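/- The stabilizer Σ_r^+ of the point θ₁[k] − v_det in the affine Weyl group Σ_r ⋉ (k+r)Λ (acting as above) is generated by the simple transpositions s_{i,i+1} for 1 ≤ i ≤ r−2 together with the affine reflection α^{r-1,r} ∘ s_{r-1,r} (translation by (k+r)α^{r-1,r} composed with the transposition s_{r-1,r}), and this subgroup is isomorphic to the symmetric group Σ_r. -/

import Mathlib

/-- Half-sum of positive roots: `ρ = (r−1, r−3, ..., 1−r)/2`. -/
noncomputable def rhoVec (r : ℕ) : Fin r → ℝ := fun i => ((r : ℝ) - 1 - 2 * (i : ℝ)) / 2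

/-- The affine Weyl transformation `λ ↦ σ(λ+ρ+v) − ρ − v + (k+r)γ` as a permutation
of `ℝ^r` (a bijection: first translate by `ρ+v`, then permute coordinates by `σ`,
then translate by `−(ρ+v) + (k+r)γ`). -/
noncomputable def affEquiv (r k : ℕ) (ρ v : Fin r → ℝ) (σ : Equiv.Perm (Fin r))
    (γ : Fin r → ℝ) : Equiv.Perm (Fin r → ℝ) :=
  (Equiv.addRight (ρ + v)).trans
    ((Equiv.piCongrLeft' (fun _ : Fin r => ℝ) σ).trans
      (Equiv.addRight (-(ρ + v) + ((k : ℝ) + r) • γ)))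

/-- The special point `θ₁[k] = (k+r)(1,...,1)/r − (k+r)x_r − ρ`. -/
noncomputable def thetaPlus (r k : ℕ) : Fin r → ℝ :=
  fun i => ((k : ℝ) + r) / r - (if (i : ℕ) = r - 1 then (k : ℝ) + r else 0) - rhoVec r i

/-- The coroot `α^{i,j} = e_i − e_j` as a real vector. -/
noncomputable def alphaVec (r : ℕ) (i j : Fin r) : Fin r → ℝ :=
  fun m => (if m = i then (1 : ℝ) else 0) - (if m = j then (1 : ℝ) else 0)

/-- The generators: the simple transpositions `s_{i,i+1}` for `1 ≤ i ≤ r−2` and the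
affine reflection `α^{r-1,r} ∘ s_{r-1,r}` (translation by `(k+r)α^{r-1,r}` composed
with the transposition `s_{r-1,r}`). -/
def genSet (r k : ℕ) (v : Fin r → ℝ) : Set (Equiv.Perm (Fin r → ℝ)) :=
  {e | ∃ i j : Fin r, (j : ℕ) = (i : ℕ) + 1 ∧ (j : ℕ) < r - 1 ∧
      e = affEquiv r k (rhoVec r) v (Equiv.swap i j) 0} ∪
  {e | ∃ i j : Fin r, (i : ℕ) = r - 2 ∧ (j : ℕ) = r - 1 ∧
      e = affEquiv r k (rhoVec r) v (Equiv.swap i j) (alphaVec r i j)}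

/-- The stabilizer `Σ_r^+` of `θ₁[k] − v_det` inside the affine Weyl group
`Σ_r ⋉ (k+r)Λ`, as a set of permutations of `ℝ^r`. -/
def stabPlusSet (r k : ℕ) (v : Fin r → ℝ) : Set (Equiv.Perm (Fin r → ℝ)) :=
  {e | (∃ σ : Equiv.Perm (Fin r), ∃ γ : Fin r → ℤ, (∑ i, γ i) = 0 ∧
      e = affEquiv r k (rhoVec r) v σ (fun i => (γ i : ℝ))) ∧
    e (thetaPlus r k - v) = thetaPlus r k - v}


/-! ### Auxiliary machinery -/

lemma affEquiv_apply (r k : ℕ) (ρ v : Fin r → ℝ) (σ : Equiv.Perm (Fin r)) (γ : Fin r → ℝ)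
    (x : Fin r → ℝ) (i : Fin r) :
    affEquiv r k ρ v σ γ x i =
      x (σ⁻¹ i) + ρ (σ⁻¹ i) + v (σ⁻¹ i) - ρ i - v i + ((k:ℝ)+r) * γ i := by
  simp [affEquiv, Equiv.piCongrLeft', Equiv.Perm.inv_def]; ring

/-- The canonical translation part making `affEquiv` fix `θ₁[k] − v`. -/
noncomputable def gammaF (r : ℕ) (σ : Equiv.Perm (Fin r)) : Fin r → ℝ :=
  fun i => (if ((σ⁻¹ i : Fin r) : ℕ) = r - 1 then (1:ℝ) else 0)
         - (if (i : ℕ) = r - 1 then (1:ℝ) else 0)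

/-- The group homomorphism `σ ↦ affEquiv σ (γ_σ)`. -/
noncomputable def phiHom (r k : ℕ) (v : Fin r → ℝ) :
    Equiv.Perm (Fin r) →* Equiv.Perm (Fin r → ℝ) where
  toFun σ := affEquiv r k (rhoVec r) v σ (gammaF r σ)
  map_one' := by ext x i; simp [affEquiv_apply, gammaF]; ring
  map_mul' σ τ := by
    ext x i
    simp only [Equiv.Perm.mul_apply, affEquiv_apply, gammaF, mul_inv_rev]
    ring

lemma phi_fix (r k : ℕ) (v : Fin r → ℝ) (σ : Equiv.Perm (Fin r)) :
    (phiHom r k v σ) (thetaPlus r k - v) = thetaPlus r k - v := by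
  funext i
  simp only [phiHom, MonoidHom.coe_mk, OneHom.coe_mk, affEquiv_apply, Pi.sub_apply,
    thetaPlus, gammaF, rhoVec]
  split_ifs <;> ring

/-- Integer version of `gammaF`. -/
def gammaZ (r : ℕ) (σ : Equiv.Perm (Fin r)) : Fin r → ℤ :=
  fun i => (if ((σ⁻¹ i : Fin r) : ℕ) = r - 1 then (1:ℤ) else 0)
         - (if (i : ℕ) = r - 1 then (1:ℤ) else 0)

lemma gammaZ_cast (r : ℕ) (σ : Equiv.Perm (Fin r)) :
    (fun i => ((gammaZ r σ i : ℤ) : ℝ)) = gammaF r σ := by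
  funext i; simp [gammaZ, gammaF]

lemma gammaZ_sum (r : ℕ) (σ : Equiv.Perm (Fin r)) : (∑ i, gammaZ r σ i) = 0 := by
  unfold gammaZ
  rw [Finset.sum_sub_distrib]
  rw [show (∑ i, if ((σ⁻¹ i : Fin r) : ℕ) = r - 1 then (1:ℤ) else 0)
        = ∑ i, (if ((i : Fin r) : ℕ) = r - 1 then (1:ℤ) else 0) from
    Equiv.sum_comp σ⁻¹ (fun j => if ((j : Fin r) : ℕ) = r - 1 then (1:ℤ) else 0)]
  simp

lemma phi_inj (r k : ℕ) (hr : 2 ≤ r) (hk : 0 < k) (v : Fin r → ℝ) :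
    Function.Injective (phiHom r k v) := by
  rw [injective_iff_map_eq_one]
  intro σ hσ
  ext j
  simp only [Equiv.Perm.one_apply]
  by_contra hne
  have hc : (3:ℝ) ≤ (k:ℝ) + r := by
    have h1 : (1:ℝ) ≤ (k:ℝ) := by exact_mod_cast hk
    have h2 : (2:ℝ) ≤ (r:ℝ) := by exact_mod_cast hr
    linarith
  set x : Fin r → ℝ := (fun m => if m = j then (1:ℝ) else 0) - rhoVec r - v with hxdef
  have hx : (phiHom r k v σ) x = x := by rw [hσ]; rfl
  have h1 := congrFun hx (σ j)
  simp only [phiHom, MonoidHom.coe_mk, OneHom.coe_mk, affEquiv_apply, hxdef,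
    Pi.sub_apply, Equiv.Perm.inv_def, Equiv.symm_apply_apply, gammaF, if_pos rfl] at h1
  rw [if_neg (show ¬ σ j = j from fun h => hne (congrArg Fin.val h))] at h1
  split_ifs at h1 <;> linarith

lemma stab_eq_range (r k : ℕ) (hr : 2 ≤ r) (hk : 0 < k) (v : Fin r → ℝ) :
    stabPlusSet r k v = Set.range (phiHom r k v) := by
  have hc0 : ((k:ℝ) + r) ≠ 0 := by
    have h1 : (0:ℝ) < (k:ℝ) := by exact_mod_cast hk
    have h2 : (0:ℝ) ≤ (r:ℝ) := Nat.cast_nonneg r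
    linarith
  ext e
  constructor
  · rintro ⟨⟨σ, γ, hsum, rfl⟩, hfix⟩
    refine ⟨σ, ?_⟩
    have hγ : (fun i => ((γ i : ℤ) : ℝ)) = gammaF r σ := by
      funext i
      have h1 := congrFun hfix i
      have h2 := congrFun (phi_fix r k v σ) i
      simp only [phiHom, MonoidHom.coe_mk, OneHom.coe_mk, affEquiv_apply,
        Pi.sub_apply] at h1 h2
      have hm : ((k:ℝ)+r) * ((γ i : ℤ) : ℝ) = ((k:ℝ)+r) * gammaF r σ i := by linarith
      exact mul_left_cancel₀ hc0 hm
    show affEquiv r k (rhoVec r) v σ (gammaF r σ) = _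
    rw [← hγ]
  · rintro ⟨σ, rfl⟩
    exact ⟨⟨σ, gammaZ r σ, gammaZ_sum r σ,
      by show _ = affEquiv r k (rhoVec r) v σ _; rw [gammaZ_cast]; rfl⟩, phi_fix r k v σ⟩

/-- The set of adjacent transpositions in `Perm (Fin r)`. -/
def adjS (r : ℕ) : Set (Equiv.Perm (Fin r)) :=
  {σ | ∃ i j : Fin r, (j : ℕ) = (i : ℕ) + 1 ∧ σ = Equiv.swap i j}

lemma closure_adj (n : ℕ) : Subgroup.closure (adjS (n+1)) = ⊤ := by
  apply top_unique
  rw [← Subgroup.closure_eq_top_of_mclosure_eq_top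
    (Equiv.Perm.mclosure_swap_castSucc_succ n)]
  apply Subgroup.closure_mono
  rintro _ ⟨i, rfl⟩
  exact ⟨i.castSucc, i.succ, by simp, rfl⟩

lemma gen_eq_image (r k : ℕ) (hr : 2 ≤ r) (v : Fin r → ℝ) :
    genSet r k v = phiHom r k v '' adjS r := by
  ext e
  constructor
  · rintro (⟨i, j, hj, hlt, rfl⟩ | ⟨i, j, hi, hj, rfl⟩)
    · refine ⟨Equiv.swap i j, ⟨i, j, hj, rfl⟩, ?_⟩
      have hg : gammaF r (Equiv.swap i j) = 0 := by
        funext m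
        simp only [gammaF, Equiv.swap_inv, Equiv.swap_apply_def, Pi.zero_apply]
        split_ifs <;> simp_all <;> omega
      show affEquiv r k (rhoVec r) v _ (gammaF r _) = _
      rw [hg]
    · refine ⟨Equiv.swap i j, ⟨i, j, by omega, rfl⟩, ?_⟩
      have hg : gammaF r (Equiv.swap i j) = alphaVec r i j := by
        funext m
        simp only [gammaF, alphaVec, Equiv.swap_inv, Equiv.swap_apply_def]
        split_ifs <;> simp_all [Fin.ext_iff] <;> omega
      show affEquiv r k (rhoVec r) v _ (gammaF r _) = _
      rw [hg]
  · rintro ⟨σ, ⟨i, j, hj, rfl⟩, rfl⟩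
    have hjle : (j : ℕ) ≤ r - 1 := by omega
    rcases lt_or_eq_of_le hjle with hlt | heq
    · left
      refine ⟨i, j, hj, hlt, ?_⟩
      have hg : gammaF r (Equiv.swap i j) = 0 := by
        funext m
        simp only [gammaF, Equiv.swap_inv, Equiv.swap_apply_def, Pi.zero_apply]
        split_ifs <;> simp_all <;> omega
      show affEquiv r k (rhoVec r) v _ (gammaF r _) = _
      rw [hg]
    · right
      refine ⟨i, j, by omega, heq, ?_⟩
      have hg : gammaF r (Equiv.swap i j) = alphaVec r i j := by
        funext m
        simp only [gammaF, alphaVec, Equiv.swap_inv, Equiv.swap_apply_def]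
        split_ifs <;> simp_all [Fin.ext_iff] <;> omega
      show affEquiv r k (rhoVec r) v _ (gammaF r _) = _
      rw [hg]

/-- the stabilizer `Σ_r^+` of `θ₁[k] − v_det` in the affine Weyl group is
generated by the simple transpositions `s_{i,i+1}`, `1 ≤ i ≤ r−2`, together with the
affine reflection `α^{r-1,r} ∘ s_{r-1,r}`, and this subgroup is isomorphic to the
symmetric group `Σ_r`. -/
theorem stmt6 (r k : ℕ) (hr : 2 ≤ r) (hk : 0 < k) (v : Fin r → ℝ) (hv : ∑ i, v i = 0) :
    Subgroup.closure (genSet r k v) = Subgroup.closure (stabPlusSet r k v) ∧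
    Nonempty (↥(Subgroup.closure (genSet r k v)) ≃* Equiv.Perm (Fin r)) := by
  have hrange : Subgroup.closure (stabPlusSet r k v) = (phiHom r k v).range := by
    rw [stab_eq_range r k hr hk v, ← MonoidHom.coe_range, Subgroup.closure_eq]
  have hS : Subgroup.closure (adjS r) = ⊤ := by
    obtain ⟨n, rfl⟩ : ∃ n, r = n + 1 := ⟨r - 1, by omega⟩
    exact closure_adj n
  have hgen : Subgroup.closure (genSet r k v) = (phiHom r k v).range := by
    rw [gen_eq_image r k hr v, ← MonoidHom.map_closure, hS, ← MonoidHom.range_eq_map]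
  refine ⟨by rw [hgen, hrange], ⟨?_⟩⟩
  exact (MulEquiv.subgroupCongr hgen).trans
    (MonoidHom.ofInjective (phi_inj r k hr hk v)).symm
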